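/- Let α, β be real numbers with 0 < α < β and let μ₁ > 0 be such that all three roots (counted with multiplicity) of the cubic p_{μ₁}(λ) = αλ³ + λ² + βμ₁λ + μ₁ are real. Then for every μ ≥ μ₁, every complex root λ of p_μ satisfies Re(λ) < −1/β. -/

import Mathlib

/-- Key normalized inequality: two points on the curve `M = u²(1-u)/(Bu-1)`,
one with the "all-real-roots" discriminant condition, one with `Bσ ≥ B-2`,
force `M1 > M`, contradicting `M1 ≤ M`. -/
lemma stmt13_key (B τ σ M1 M : ℝ) (hB : 1 < B) (hM1 : 0 < M1) (hM : M1 ≤ M)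
    (hτ0 : 0 < τ) (hτ2 : 1 < B*τ) (hg : 4*τ ≤ (1-τ)*(B*τ-1))
    (ht : M1*(B*τ-1) = τ^2*(1-τ))
    (hσ0 : B-2 ≤ B*σ)
    (hs : M*(B*σ-1) = σ^2*(1-σ)) : False := by
  have hB0 : (0:ℝ) < B := by linarith
  have hB3 : 3 < B := by nlinarith [mul_pos (mul_pos hB0 hτ0) hτ0]
  have hτv : B*τ < B - 2 := by
    by_contra h
    push_neg at h
    nlinarith [mul_pos hB0 hτ0]
  have hQτ : 0 < (B-3)*(B*τ-1)^2 + (B-1) := by nlinarith [sq_nonneg (B*τ-1)]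
  have hQσ : 0 < (B-3)*(B*σ-1)^2 + (B-1) := by nlinarith [sq_nonneg (B*σ-1)]
  have h3τ : (0:ℝ) < B*τ-1 := by linarith
  have h3σ : (0:ℝ) < B*σ-1 := by linarith
  have claim2 : 2*(B-2)^2 < B^3*(B-3)*M1 := by
    have h1 : 2*(B-2)^2*(B*τ-1) < (B*τ)^2*(B-B*τ)*(B-3) := by
      nlinarith [mul_neg_of_neg_of_pos (show B*τ-(B-2) < 0 by linarith) hQτ]
    have h2 : (B*τ)^2*(B-B*τ)*(B-3) = (B^3*(B-3)*M1)*(B*τ-1) := by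
      have h5 : (B*τ)^2*(B-B*τ)*(B-3) = B^3*(B-3)*(τ^2*(1-τ)) := by ring
      rw [h5, ← ht]; ring
    rw [h2] at h1
    exact lt_of_mul_lt_mul_right h1 h3τ.le
  have claim1 : B^3*(B-3)*M ≤ 2*(B-2)^2 := by
    have h1 : (B*σ)^2*(B-B*σ)*(B-3) ≤ 2*(B-2)^2*(B*σ-1) := by
      nlinarith [mul_nonneg (show (0:ℝ) ≤ B*σ-(B-2) by linarith) (le_of_lt hQσ)]
    have h2 : (B*σ)^2*(B-B*σ)*(B-3) = (B^3*(B-3)*M)*(B*σ-1) := by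
      have h5 : (B*σ)^2*(B-B*σ)*(B-3) = B^3*(B-3)*(σ^2*(1-σ)) := by ring
      rw [h5, ← hs]; ring
    rw [h2] at h1
    exact le_of_mul_le_mul_right h1 h3σ
  have hBB : 0 < B^3*(B-3) := mul_pos (pow_pos hB0 3) (by linarith)
  nlinarith [mul_le_mul_of_nonneg_left hM (le_of_lt hBB)]

/-- From the all-real-roots hypothesis at `μ₁`, produce a real point `t` on the curve
with the discriminant condition. -/
lemma stmt13_exists_t (α β : ℝ) (hα : 0 < α) (hαβ : α < β)
    (μ₁ : ℝ) (hμ₁ : 0 < μ₁)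
    (hreal : ∀ z : ℂ, (α : ℂ) * z ^ 3 + z ^ 2 + (β : ℂ) * (μ₁ : ℂ) * z + (μ₁ : ℂ) = 0 →
      z.im = 0) :
    ∃ t : ℝ, 0 < t ∧ α*t < 1 ∧ 1 < β*t ∧ μ₁*(β*t-1) = t^2*(1-α*t) ∧
      4*(α*t) ≤ (1-α*t)*(β*t-1) := by
  have hβ0 : (0:ℝ) < β := lt_trans hα hαβ
  set f : ℝ → ℝ := fun x => α*x^3+x^2+β*μ₁*x+μ₁ with hf
  have hfa : f (-(1/α)) < 0 := by
    have h : f (-(1/α)) = μ₁*(α-β)/α := by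
      rw [hf]; field_simp; ring
    rw [h]
    apply div_neg_of_neg_of_pos _ hα
    nlinarith
  have hfb : 0 < f (-(1/β)) := by
    have h : f (-(1/β)) = (β-α)/β^3 := by
      rw [hf]; field_simp; ring
    rw [h]
    exact div_pos (by linarith) (by positivity)
  have hab : -(1/α) ≤ -(1/β) := by
    have := one_div_le_one_div_of_le hα (le_of_lt hαβ)
    linarith
  have hcont : ContinuousOn f (Set.Icc (-(1/α)) (-(1/β))) := by
    apply Continuous.continuousOn; rw [hf]; continuity
  have hmem : (0:ℝ) ∈ Set.Ioo (f (-(1/α))) (f (-(1/β))) := ⟨hfa, hfb⟩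
  obtain ⟨c, hcmem, hfc⟩ := intermediate_value_Ioo hab hcont hmem
  obtain ⟨hc1, hc2⟩ := hcmem
  have hfc' : α*c^3+c^2+β*μ₁*c+μ₁ = 0 := hfc
  obtain ⟨t, htdef⟩ : ∃ t : ℝ, t = -c := ⟨-c, rfl⟩
  have hia : (0:ℝ) < 1/α := by positivity
  have hib : (0:ℝ) < 1/β := by positivity
  have haa : α*(1/α) = 1 := by field_simp
  have hbb : β*(1/β) = 1 := by field_simp
  have ht0 : 0 < t := by rw [htdef]; linarith
  have ht1 : α*t < 1 := by
    have h1 : t < 1/α := by rw [htdef]; linarith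
    nlinarith [mul_lt_mul_of_pos_left h1 hα]
  have ht2 : 1 < β*t := by
    have h1 : 1/β < t := by rw [htdef]; linarith
    nlinarith [mul_lt_mul_of_pos_left h1 hβ0]
  have hcurve : μ₁*(β*t-1) = t^2*(1-α*t) := by
    rw [htdef]; linear_combination -hfc'
  refine ⟨t, ht0, ht1, ht2, hcurve, ?_⟩
  by_contra hlt
  push_neg at hlt
  -- radicand is positive
  obtain ⟨R, hRdef⟩ : ∃ R : ℝ, R = 4*(α*t)*μ₁ - (t*(1-α*t))^2 :=
    ⟨_, rfl⟩
  have hR : 0 < R := by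
    have h1 : R*(β*t-1) = t^2*(1-α*t)*(4*(α*t) - (1-α*t)*(β*t-1)) := by
      rw [hRdef]; linear_combination (4*α*t)*hcurve
    have h2 : 0 < R*(β*t-1) := by
      rw [h1]
      apply mul_pos (mul_pos (pow_pos ht0 2) (by linarith)) (by linarith)
    by_contra h
    push_neg at h
    nlinarith [mul_nonpos_of_nonpos_of_nonneg h (show (0:ℝ) ≤ β*t-1 by linarith)]
  -- construct a non-real root of p_{μ₁}
  obtain ⟨X, hXdef⟩ : ∃ X : ℝ, X = (α*t-1)/(2*α) := ⟨_, rfl⟩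
  obtain ⟨Y, hYdef⟩ : ∃ Y : ℝ, Y = Real.sqrt R / (2*(α*t)) := ⟨_, rfl⟩
  have hat0 : 0 < α*t := mul_pos hα ht0
  have hX : 2*α*t*X = -(t*(1-α*t)) := by
    rw [hXdef]; field_simp; ring
  have hY : 2*α*t*Y = Real.sqrt R := by
    rw [hYdef]; field_simp
  have hY2 : (2*α*t*Y)^2 = R := by
    rw [hY]; exact Real.sq_sqrt hR.le
  have hYpos : 0 < Y := by
    rw [hYdef]
    exact div_pos (Real.sqrt_pos.mpr hR) (by linarith)
  obtain ⟨w, hwdef⟩ : ∃ w : ℂ, w = (X:ℂ) + (Y:ℂ)*Complex.I := ⟨_, rfl⟩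
  have hXC : 2*(α:ℂ)*t*X = -((t:ℂ)*(1-(α:ℂ)*t)) := by
    have h := congrArg (fun r : ℝ => (r:ℂ)) hX
    push_cast at h
    linear_combination h
  have hY2C : (2*(α:ℂ)*t*Y)^2 = (R:ℂ) := by
    have h := congrArg (fun r : ℝ => (r:ℂ)) hY2
    push_cast at h
    linear_combination h
  have hRC : (R:ℂ) = 4*((α:ℂ)*t)*μ₁ - ((t:ℂ)*(1-(α:ℂ)*t))^2 := by
    have h := congrArg (fun r : ℝ => (r:ℂ)) hRdef
    push_cast at h
    linear_combination h
  have hq4 : ((4*α*t : ℝ) : ℂ) * (((α:ℂ)*t)*w^2 + ((t:ℂ)*(1-(α:ℂ)*t))*w + (μ₁:ℂ)) = 0 := by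
    rw [hwdef]
    push_cast
    linear_combination (2*(α:ℂ)*t*X + t*(1-(α:ℂ)*t) + 4*(α:ℂ)*t*Y*Complex.I) * hXC
      - hY2C - hRC + ((2*(α:ℂ)*t*Y)^2) * Complex.I_sq
  have h4ne : ((4*α*t : ℝ) : ℂ) ≠ 0 := by
    rw [Complex.ofReal_ne_zero]; positivity
  have hquad : ((α:ℂ)*t)*w^2 + ((t:ℂ)*(1-(α:ℂ)*t))*w + (μ₁:ℂ) = 0 :=
    (mul_eq_zero.mp hq4).resolve_left h4ne
  have hcurveC : (μ₁:ℂ)*((β:ℂ)*t-1) = (t:ℂ)^2*(1-(α:ℂ)*t) := by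
    have h := congrArg (fun r : ℝ => (r:ℂ)) hcurve
    push_cast at h
    linear_combination h
  have htC : ((t : ℝ) : ℂ) ≠ 0 := by
    rw [Complex.ofReal_ne_zero]; positivity
  have h9 : (t:ℂ) * ((α:ℂ)*w^3 + w^2 + (β:ℂ)*(μ₁:ℂ)*w + (μ₁:ℂ)) = 0 := by
    linear_combination (w + (t:ℂ))*hquad + w*hcurveC
  have hcubic : (α:ℂ)*w^3 + w^2 + (β:ℂ)*(μ₁:ℂ)*w + (μ₁:ℂ) = 0 :=
    (mul_eq_zero.mp h9).resolve_left htC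
  have him := hreal w hcubic
  have hwim : w.im = Y := by
    rw [hwdef]; simp
  rw [hwim] at him
  exact absurd him (ne_of_gt hYpos)

theorem stmt_13 (α β : ℝ) (hα : 0 < α) (hαβ : α < β)
    (μ₁ : ℝ) (hμ₁ : 0 < μ₁)
    (hreal : ∀ z : ℂ, (α : ℂ) * z ^ 3 + z ^ 2 + (β : ℂ) * (μ₁ : ℂ) * z + (μ₁ : ℂ) = 0 →
      z.im = 0)
    (μ : ℝ) (hμ : μ₁ ≤ μ) (z : ℂ)
    (hroot : (α : ℂ) * z ^ 3 + z ^ 2 + (β : ℂ) * (μ : ℂ) * z + (μ : ℂ) = 0) :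
    z.re < -1 / β := by
  by_contra hcon
  push_neg at hcon
  have hβ0 : (0:ℝ) < β := lt_trans hα hαβ
  have hμ0 : 0 < μ := lt_of_lt_of_le hμ₁ hμ
  rw [Complex.ext_iff] at hroot
  obtain ⟨e1, e2⟩ := hroot
  simp only [Complex.add_re, Complex.add_im, Complex.mul_re, Complex.mul_im,
    Complex.ofReal_re, Complex.ofReal_im, Complex.zero_re, Complex.zero_im,
    pow_succ, pow_zero, one_mul, Complex.one_re, Complex.one_im] at e1 e2
  set x := z.re with hxd
  set y := z.im with hyd
  have E1 : α*(x^3 - 3*x*y^2) + (x^2-y^2) + β*μ*x + μ = 0 := by linear_combination e1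
  have E2 : y*(3*α*x^2 - α*y^2 + 2*x + β*μ) = 0 := by linear_combination e2
  have hxb : -1 ≤ β*x := by
    have h : (-1)/β ≤ x := hcon
    have := (div_le_iff₀ hβ0).mp h
    linarith
  rcases eq_or_ne y 0 with hy | hy
  · -- real root case
    rw [hy] at E1
    have E1' : α*x^3+x^2+β*μ*x+μ = 0 := by linear_combination E1
    have h1 : β*x+1 ≤ 0 := by
      nlinarith [mul_nonneg (sq_nonneg x) (show (0:ℝ) ≤ α*β*x+β by nlinarith),
        mul_pos hμ0 hβ0]
    have h2 : β*x = -1 := le_antisymm (by linarith) hxb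
    have h3 : x < 0 := by nlinarith
    have h4 : α*x^3+x^2 = 0 := by linear_combination E1' - μ*h2
    have h5 : α*(β*x) = -α := by rw [h2]; ring
    have h6 : 0 < α*x+1 := by nlinarith
    nlinarith [mul_pos (mul_pos (neg_pos.mpr h3) (neg_pos.mpr h3)) h6]
  · -- complex root case
    have E : 3*α*x^2 - α*y^2 + 2*x + β*μ = 0 :=
      (mul_eq_zero.mp E2).resolve_left hy
    have hE2' : μ*(2*α*β*x + β - α) = -(2*x*(2*α*x+1)^2) := by
      linear_combination (-α)*E1 + (3*α*x+1)*E
    obtain ⟨t, ht0, ht1, ht2, hcurvet, hgt⟩ := stmt13_exists_t α β hα hαβ μ₁ hμ₁ hreal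
    have hBt : (β/α)*(α*t) = β*t := by field_simp
    have hB : 1 < β/α := (one_lt_div hα).mpr hαβ
    have hM1 : 0 < α^2*μ₁ := by positivity
    have hM : α^2*μ₁ ≤ α^2*μ := mul_le_mul_of_nonneg_left hμ (by positivity)
    have hτ0 : 0 < α*t := mul_pos hα ht0
    have hτ2 : 1 < (β/α)*(α*t) := by rw [hBt]; exact ht2
    have hg : 4*(α*t) ≤ (1-(α*t))*((β/α)*(α*t)-1) := by rw [hBt]; exact hgt
    have htt : (α^2*μ₁)*((β/α)*(α*t)-1) = (α*t)^2*(1-(α*t)) := by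
      rw [hBt]; linear_combination α^2*hcurvet
    have hσ0 : β/α-2 ≤ (β/α)*(2*α*x+1) := by
      have h : (β/α)*(2*α*x+1) = 2*(β*x) + β/α := by field_simp
      rw [h]; linarith
    have hs : (α^2*μ)*((β/α)*(2*α*x+1)-1) = (2*α*x+1)^2*(1-(2*α*x+1)) := by
      have h : (α^2*μ)*((β/α)*(2*α*x+1)-1) = α*(μ*(2*α*β*x+β-α)) := by
        field_simp
      rw [h, hE2']; ring
    exact stmt13_key (β/α) (α*t) (2*α*x+1) (α^2*μ₁) (α^2*μ)
      hB hM1 hM hτ0 hτ2 hg htt hσ0 hs
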